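/- arXiv:2605.16645 — 3 statements merged into one kernel-verified Lean document; each statement's English description precedes it below -/
import Mathlib

section
/- Let μ₁, ν₁ ∈ ℝ^d, let Σ be a positive definite d×d matrix, and let α, ε ≥ 0. Define Δ = ‖Σ^{−1/2}(μ₁ − ν₁)‖₂ and the set R = { μ ∈ ℝ^d : ⟨μ₁−μ, Σ⁻¹(μ₁−μ)⟩ ≥ α² and ⟨ν₁−μ, Σ⁻¹(ν₁−μ)⟩ ≤ ε² }. Then R is empty if and only if Δ + ε < α. -/
open Matrix

lemma quad_aux (d : ℕ) (C S : Matrix (Fin d) (Fin d) ℝ) (hS : S.PosDef) (hSS : S * S = C)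
    (v : Fin d → ℝ) : v ⬝ᵥ C⁻¹.mulVec v = (S⁻¹.mulVec v) ⬝ᵥ (S⁻¹.mulVec v) := by
  have hinv : C⁻¹ = S⁻¹ * S⁻¹ := by rw [← hSS, Matrix.mul_inv_rev]
  have hsymm : S⁻¹.transpose = S⁻¹ := by
    rw [Matrix.transpose_nonsing_inv]; congr 1; exact hS.isHermitian.eq
  rw [hinv, ← Matrix.mulVec_mulVec, Matrix.dotProduct_mulVec, ← Matrix.mulVec_transpose, hsymm]

lemma dot_norm (d : ℕ) (x : Fin d → ℝ) :
    x ⬝ᵥ x = ‖(WithLp.equiv 2 (Fin d → ℝ)).symm x‖ ^ 2 := by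
  rw [EuclideanSpace.norm_eq, Real.sq_sqrt (by positivity)]
  simp [dotProduct, sq]

lemma norm_key (d : ℕ) (hd : 0 < d) (W : EuclideanSpace ℝ (Fin d)) (α ε : ℝ)
    (hα : 0 ≤ α) (hε : 0 ≤ ε) :
    (∃ X : EuclideanSpace ℝ (Fin d), α ≤ ‖X‖ ∧ ‖X - W‖ ≤ ε) ↔ α ≤ ‖W‖ + ε := by
  constructor
  · rintro ⟨X, h1, h2⟩
    calc α ≤ ‖X‖ := h1
    _ = ‖(X - W) + W‖ := by rw [sub_add_cancel]
    _ ≤ ‖X - W‖ + ‖W‖ := norm_add_le _ _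
    _ ≤ ε + ‖W‖ := by linarith
    _ = ‖W‖ + ε := by ring
  · intro h
    by_cases hW : W = 0
    · refine ⟨ε • EuclideanSpace.single ⟨0, hd⟩ (1:ℝ), ?_, ?_⟩
      · rw [norm_smul]
        simp only [EuclideanSpace.norm_single, norm_one, mul_one, Real.norm_eq_abs,
          abs_of_nonneg hε]
        simpa [hW] using h
      · rw [hW, sub_zero, norm_smul]
        simp [EuclideanSpace.norm_single, abs_of_nonneg hε]
    · have hWn : (0:ℝ) < ‖W‖ := norm_pos_iff.mpr hW
      refine ⟨(1 + ε / ‖W‖) • W, ?_, ?_⟩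
      · rw [norm_smul, Real.norm_eq_abs, abs_of_nonneg (by positivity)]
        have : (1 + ε / ‖W‖) * ‖W‖ = ‖W‖ + ε := by field_simp
        linarith [this]
      · have : (1 + ε / ‖W‖) • W - W = (ε / ‖W‖) • W := by
          rw [add_smul, one_smul]; abel
        rw [this, norm_smul, Real.norm_eq_abs, abs_of_nonneg (by positivity),
          div_mul_cancel₀ _ (ne_of_gt hWn)]

/-- Feasible region for shifted Gaussians: emptiness criterion. `C` is the
covariance matrix `Σ ≻ 0` and `S` its positive-definite square root, so that
`‖Σ^{-1/2} v‖₂ = √(S⁻¹v ⬝ S⁻¹v)` and `‖Σ^{-1/2} v‖₂² = v ⬝ Σ⁻¹ v`. -/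
theorem stmt_4 (d : ℕ) (hd : 0 < d) (μ₁ ν₁ : Fin d → ℝ) (C S : Matrix (Fin d) (Fin d) ℝ)
    (hC : C.PosDef) (hS : S.PosDef) (hSS : S * S = C)
    (α ε : ℝ) (hα : 0 ≤ α) (hε : 0 ≤ ε)
    (Δ : ℝ) (hΔ : Δ = Real.sqrt ((S⁻¹.mulVec (μ₁ - ν₁)) ⬝ᵥ (S⁻¹.mulVec (μ₁ - ν₁))))
    (R : Set (Fin d → ℝ))
    (hR : R = {μ | α ^ 2 ≤ (μ₁ - μ) ⬝ᵥ (C⁻¹.mulVec (μ₁ - μ)) ∧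
                   (ν₁ - μ) ⬝ᵥ (C⁻¹.mulVec (ν₁ - μ)) ≤ ε ^ 2}) :
    R = ∅ ↔ Δ + ε < α := by
  set w : Fin d → ℝ := S⁻¹.mulVec (μ₁ - ν₁) with hw
  have hSdet : IsUnit S.det := isUnit_iff_ne_zero.mpr (ne_of_gt hS.det_pos)
  -- R nonempty ↔ ∃ x with conditions in terms of x
  have step1 : R.Nonempty ↔
      ∃ x : Fin d → ℝ, α ^ 2 ≤ x ⬝ᵥ x ∧ (x - w) ⬝ᵥ (x - w) ≤ ε ^ 2 := by
    constructor
    · rintro ⟨μ, hμ⟩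
      rw [hR] at hμ
      refine ⟨S⁻¹.mulVec (μ₁ - μ), ?_, ?_⟩
      · rw [← quad_aux d C S hS hSS]; exact hμ.1
      · have : S⁻¹.mulVec (μ₁ - μ) - w = S⁻¹.mulVec (ν₁ - μ) := by
          rw [hw, ← Matrix.mulVec_sub]
          congr 1
          abel
        rw [this, ← quad_aux d C S hS hSS]; exact hμ.2
    · rintro ⟨x, h1, h2⟩
      refine ⟨μ₁ - S.mulVec x, ?_⟩
      rw [hR]
      have hx : S⁻¹.mulVec (μ₁ - (μ₁ - S.mulVec x)) = x := by
        simp only [sub_sub_cancel, Matrix.mulVec_mulVec, Matrix.nonsing_inv_mul _ hSdet,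
          Matrix.one_mulVec]
      have hx2 : S⁻¹.mulVec (ν₁ - (μ₁ - S.mulVec x)) = x - w := by
        have : ν₁ - (μ₁ - S.mulVec x) = (μ₁ - (μ₁ - S.mulVec x)) - (μ₁ - ν₁) := by abel
        rw [this, Matrix.mulVec_sub, hx, hw]
      constructor
      · rw [quad_aux d C S hS hSS, hx]; exact h1
      · rw [quad_aux d C S hS hSS, hx2]; exact h2
  -- translate to Euclidean norms
  set W : EuclideanSpace ℝ (Fin d) := (WithLp.equiv 2 (Fin d → ℝ)).symm w with hW
  have hΔW : Δ = ‖W‖ := by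
    rw [hΔ, dot_norm, Real.sqrt_sq (norm_nonneg _)]
  have step2 : (∃ x : Fin d → ℝ, α ^ 2 ≤ x ⬝ᵥ x ∧ (x - w) ⬝ᵥ (x - w) ≤ ε ^ 2) ↔
      ∃ X : EuclideanSpace ℝ (Fin d), α ≤ ‖X‖ ∧ ‖X - W‖ ≤ ε := by
    constructor
    · rintro ⟨x, h1, h2⟩
      refine ⟨(WithLp.equiv 2 (Fin d → ℝ)).symm x, ?_, ?_⟩
      · rw [dot_norm] at h1
        exact le_of_sq_le_sq h1 (norm_nonneg _)
      · rw [dot_norm] at h2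
        have hXW : (WithLp.equiv 2 (Fin d → ℝ)).symm x - W = (WithLp.equiv 2 (Fin d → ℝ)).symm (x - w) := by
          rfl
        rw [hXW]
        exact abs_le_of_sq_le_sq' h2 hε |>.2
    · rintro ⟨X, h1, h2⟩
      refine ⟨WithLp.equiv 2 (Fin d → ℝ) X, ?_, ?_⟩
      · rw [dot_norm]
        have : (WithLp.equiv 2 (Fin d → ℝ)).symm (WithLp.equiv 2 (Fin d → ℝ) X) = X := rfl
        rw [this]
        exact pow_le_pow_left₀ hα h1 2
      · rw [dot_norm]
        have : (WithLp.equiv 2 (Fin d → ℝ)).symm (WithLp.equiv 2 (Fin d → ℝ) X - w) = X - W := rfl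
        rw [this]
        exact pow_le_pow_left₀ (norm_nonneg _) h2 2
  rw [← Set.not_nonempty_iff_eq_empty, step1, step2, norm_key d hd W α ε hα hε, hΔW, not_le]
end

section
/- For a, b, c, d > 0, the following are equivalent: (i) there exist s ∈ [0,1] and r ≥ 0 with c = s·a + r and d = s·b + r; (ii) (a,b) and (c,d) are similarly ordered (i.e., either a ≤ b and c ≤ d, or a ≥ b and c ≥ d), and moreover |c − d| ≤ |a − b| and max(a,b)/min(a,b) ≥ max(c,d)/min(c,d). -/
open Set

/-- Characterization of affine (thinning–superposition) transport between
positive pairs: `(c,d)` is obtained from `(a,b)` by `c = s·a + r`, `d = s·b + r`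
with `s ∈ [0,1]`, `r ≥ 0`, iff the pairs are similarly ordered, `|c-d| ≤ |a-b|`,
and `max(a,b)/min(a,b) ≥ max(c,d)/min(c,d)`. -/
theorem stmt_8 (a b c d : ℝ) (ha : 0 < a) (hb : 0 < b) (hc : 0 < c) (hd : 0 < d) :
    (∃ s ∈ Icc (0 : ℝ) 1, ∃ r : ℝ, 0 ≤ r ∧ c = s * a + r ∧ d = s * b + r) ↔
      ((a ≤ b ∧ c ≤ d) ∨ (b ≤ a ∧ d ≤ c)) ∧ |c - d| ≤ |a - b| ∧
        max c d / min c d ≤ max a b / min a b := by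
  constructor
  · rintro ⟨s, ⟨hs0, hs1⟩, r, hr, rfl, rfl⟩
    refine ⟨?_, ?_, ?_⟩
    · rcases le_total a b with h | h
      · exact Or.inl ⟨h, by nlinarith⟩
      · exact Or.inr ⟨h, by nlinarith⟩
    · have h1 : (s*a+r) - (s*b+r) = s*(a-b) := by ring
      rw [h1, abs_mul, abs_of_nonneg hs0]
      nlinarith [abs_nonneg (a-b)]
    · rcases le_total a b with h | h
      · have hcd : s*a+r ≤ s*b+r := by nlinarith
        rw [max_eq_right h, min_eq_left h, max_eq_right hcd, min_eq_left hcd,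
          div_le_div_iff₀ (by positivity) ha]
        nlinarith
      · have hcd : s*b+r ≤ s*a+r := by nlinarith
        rw [max_eq_left h, min_eq_right h, max_eq_left hcd, min_eq_right hcd,
          div_le_div_iff₀ (by positivity) hb]
        nlinarith
  · rintro ⟨hord, habs, hratio⟩
    rcases hord with ⟨hab, hcd⟩ | ⟨hab, hcd⟩
    · rw [max_eq_right hab, min_eq_left hab, max_eq_right hcd, min_eq_left hcd,
        div_le_div_iff₀ hc ha] at hratio
      rw [abs_of_nonpos (by linarith), abs_of_nonpos (by linarith)] at habs
      rcases eq_or_lt_of_le hab with rfl | hab'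
      · have hdc : d = c := by linarith
        exact ⟨0, ⟨le_refl _, zero_le_one⟩, c, hc.le, by ring, by rw [hdc]; ring⟩
      · refine ⟨(d-c)/(b-a), ⟨div_nonneg (by linarith) (by linarith), ?_⟩,
          (b*c - a*d)/(b-a), div_nonneg (by nlinarith) (by linarith), ?_, ?_⟩
        · rw [div_le_one (by linarith)]; linarith
        · have h0 : b - a ≠ 0 := by linarith
          field_simp
          ring
        · have h0 : b - a ≠ 0 := by linarith
          field_simp
          ring
    · rw [max_eq_left hab, min_eq_right hab, max_eq_left hcd, min_eq_right hcd,
        div_le_div_iff₀ hd hb] at hratio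
      rw [abs_of_nonneg (by linarith), abs_of_nonneg (by linarith)] at habs
      rcases eq_or_lt_of_le hab with rfl | hab'
      · have hdc : c = d := by linarith
        exact ⟨0, ⟨le_refl _, zero_le_one⟩, d, hd.le, by rw [hdc]; ring, by ring⟩
      · refine ⟨(c-d)/(a-b), ⟨div_nonneg (by linarith) (by linarith), ?_⟩,
          (a*d - b*c)/(a-b), div_nonneg (by nlinarith) (by linarith), ?_, ?_⟩
        · rw [div_le_one (by linarith)]; linarith
        · have h0 : a - b ≠ 0 := by linarith
          field_simp
          ring
        · have h0 : a - b ≠ 0 := by linarith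
          field_simp
          ring
end

section
/- Let μ₁, ν₁ > 0 and let α > 1, 0 < ε < 1. Define R_P = { μ > 0 : ∃ s₁, s₂ ∈ [0,1], r₁, r₂ ≥ 0 with 1 = s₁μ + r₁, α = s₁μ₁ + r₁, μ = s₂ + r₂, ν₁ = s₂ε + r₂ }. Then R_P = [ ν₁, min{ μ₁/α, μ₁ − α + 1, ν₁/ε, ν₁ − ε + 1 } ] provided ν₁ ≤ min{ μ₁/α, μ₁ − α + 1 }, and R_P = ∅ otherwise. -/
open Set

lemma stmt_14_key (μ₁ ν₁ α ε μ : ℝ) (hμ₁ : 0 < μ₁) (hν₁ : 0 < ν₁)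
    (hα : 1 < α) (hε0 : 0 < ε) (hε1 : ε < 1) :
    (0 < μ ∧ ∃ s₁ ∈ Icc (0 : ℝ) 1, ∃ s₂ ∈ Icc (0 : ℝ) 1,
        ∃ r₁ : ℝ, 0 ≤ r₁ ∧ ∃ r₂ : ℝ, 0 ≤ r₂ ∧
          1 = s₁ * μ + r₁ ∧ α = s₁ * μ₁ + r₁ ∧ μ = s₂ + r₂ ∧ ν₁ = s₂ * ε + r₂)
    ↔ (ν₁ ≤ μ ∧ μ ≤ μ₁ / α ∧ μ ≤ μ₁ - α + 1 ∧ μ ≤ ν₁ / ε ∧ μ ≤ ν₁ - ε + 1) := by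
  have hε : 0 < 1 - ε := by linarith
  have hαpos : (0:ℝ) < α := by linarith
  constructor
  · rintro ⟨hμ, s₁, ⟨hs₁0, hs₁1⟩, s₂, ⟨hs₂0, hs₂1⟩, r₁, hr₁, r₂, hr₂, h1, h2, h3, h4⟩
    have hs₁pos : 0 < s₁ := by
      rcases hs₁0.lt_or_eq with h | h
      · exact h
      · exfalso; rw [← h] at h1 h2; simp at h1 h2; linarith
    have hd : 0 < μ₁ - μ := by
      by_contra h
      push_neg at h
      nlinarith
    refine ⟨?_, ?_, ?_, ?_, ?_⟩
    · nlinarith [mul_nonneg hs₂0 hε.le]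
    · rw [le_div_iff₀ hαpos]
      nlinarith [mul_nonneg hr₁ (by linarith : (0:ℝ) ≤ α - 1)]
    · nlinarith [mul_nonneg (by linarith : (0:ℝ) ≤ 1 - s₁) hd.le]
    · rw [le_div_iff₀ hε0]
      nlinarith [mul_nonneg hr₂ hε.le]
    · nlinarith [mul_nonneg (by linarith : (0:ℝ) ≤ 1 - s₂) hε.le]
  · rintro ⟨hl, h1, h2, h3, h4⟩
    have hμpos : 0 < μ := lt_of_lt_of_le hν₁ hl
    have hμα : μ * α ≤ μ₁ := (le_div_iff₀ hαpos).mp h1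
    have hμε : μ * ε ≤ ν₁ := (le_div_iff₀ hε0).mp h3
    have hd : 0 < μ₁ - μ := by nlinarith
    refine ⟨hμpos, (α - 1) / (μ₁ - μ), ⟨div_nonneg (by linarith) hd.le, ?_⟩,
      (μ - ν₁) / (1 - ε), ⟨div_nonneg (by linarith) hε.le, ?_⟩,
      1 - (α - 1) / (μ₁ - μ) * μ, ?_, μ - (μ - ν₁) / (1 - ε), ?_, ?_, ?_, ?_, ?_⟩
    · rw [div_le_one hd]; linarith
    · rw [div_le_one hε]; linarith
    · rw [sub_nonneg, div_mul_eq_mul_div, div_le_one hd]; nlinarith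
    · rw [sub_nonneg, div_le_iff₀ hε]; nlinarith
    · ring
    · field_simp; ring
    · ring
    · field_simp; ring
  
/-- Feasible region for the Poisson family via thinning–superposition transport. -/
theorem stmt_14 (μ₁ ν₁ α ε : ℝ) (hμ₁ : 0 < μ₁) (hν₁ : 0 < ν₁)
    (hα : 1 < α) (hε0 : 0 < ε) (hε1 : ε < 1)
    (RP : Set ℝ)
    (hRP : RP = { μ : ℝ | 0 < μ ∧ ∃ s₁ ∈ Icc (0 : ℝ) 1, ∃ s₂ ∈ Icc (0 : ℝ) 1,
        ∃ r₁ : ℝ, 0 ≤ r₁ ∧ ∃ r₂ : ℝ, 0 ≤ r₂ ∧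
          1 = s₁ * μ + r₁ ∧ α = s₁ * μ₁ + r₁ ∧ μ = s₂ + r₂ ∧ ν₁ = s₂ * ε + r₂ }) :
    (ν₁ ≤ min (μ₁ / α) (μ₁ - α + 1) →
      RP = Icc ν₁ (min (μ₁ / α) (min (μ₁ - α + 1) (min (ν₁ / ε) (ν₁ - ε + 1))))) ∧
    (¬ ν₁ ≤ min (μ₁ / α) (μ₁ - α + 1) → RP = ∅) := by
  have key : ∀ μ : ℝ, μ ∈ RP ↔
      (ν₁ ≤ μ ∧ μ ≤ μ₁ / α ∧ μ ≤ μ₁ - α + 1 ∧ μ ≤ ν₁ / ε ∧ μ ≤ ν₁ - ε + 1) := by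
    intro μ
    rw [hRP]
    exact stmt_14_key μ₁ ν₁ α ε μ hμ₁ hν₁ hα hε0 hε1
  constructor
  · intro _
    ext μ
    rw [key μ, mem_Icc, le_min_iff, le_min_iff, le_min_iff]
  · intro hcond
    rw [le_min_iff] at hcond
    push_neg at hcond
    ext μ
    simp only [key μ, mem_empty_iff_false, iff_false]
    rintro ⟨hl, h1, h2, _, _⟩
    have := hcond (hl.trans h1)
    linarith [hl.trans h2]
end
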